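/- For every n ≥ 2 and every q ≥ 2 there exists an output-stabilizing stateless protocol on the unidirectional n-ring with label space Σ = {0,1,…,q−1} whose round complexity is exactly n·(q−1): there is an input and initial labeling for which some node's output changes at time step n·(q−1), and under every input and initial labeling all outputs are constant from time step n·(q−1) onward. -/

import Mathlib

/-- A stateless protocol on the directed graph with node set `Fin n` and edge set
`E`, with label space `Λ`.  `react i` maps the current labeling (of which only
the values on `i`'s incoming edges may be used, per `react_local`) together with
`i`'s input bit to a new labeling (of which only the values on `i`'s outgoing
edges are ever read) together with an output bit. -/
structure StatelessProtocol (n : ℕ) (E : Finset (Fin n × Fin n)) (Λ : Type) where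
  react : Fin n → ({e // e ∈ E} → Λ) → Bool → ({e // e ∈ E} → Λ) × Bool
  react_local : ∀ (i : Fin n) (ℓ ℓ' : {e // e ∈ E} → Λ) (x : Bool),
      (∀ e : {e // e ∈ E}, e.1.2 = i → ℓ e = ℓ' e) → react i ℓ x = react i ℓ' x

namespace StatelessProtocol

variable {n : ℕ} {E : Finset (Fin n × Fin n)} {Λ : Type}

/-- `run P x σ ℓ0 t` is the labeling after `t` time steps of the run of `P` on
input `x` from initial labeling `ℓ0`, where `σ t` is the set of nodes activated
at time step `t + 1`. -/
def run (P : StatelessProtocol n E Λ) (x : Fin n → Bool) (σ : ℕ → Finset (Fin n))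
    (ℓ0 : {e // e ∈ E} → Λ) : ℕ → {e // e ∈ E} → Λ
  | 0 => ℓ0
  | t + 1 => fun e =>
      if e.1.1 ∈ σ t then (P.react e.1.1 (run P x σ ℓ0 t) (x e.1.1)).1 e
      else run P x σ ℓ0 t e

/-- A schedule is `r`-fair if every node is activated at least once in every
window of `r` consecutive time steps. -/
def Fair (σ : ℕ → Finset (Fin n)) (r : ℕ) : Prop :=
  ∀ (i : Fin n) (t : ℕ), ∃ s, t ≤ s ∧ s < t + r ∧ i ∈ σ s

/-- A labeling is stable for input `x` if every reaction function is at a fixed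
point: each node's prescribed outgoing labels coincide with the current ones. -/
def Stable (P : StatelessProtocol n E Λ) (x : Fin n → Bool)
    (ℓ : {e // e ∈ E} → Λ) : Prop :=
  ∀ e : {e // e ∈ E}, (P.react e.1.1 ℓ (x e.1.1)).1 e = ℓ e

/-- The labeling after `t` steps of the synchronous run (all nodes activated at
every step). -/
def syncRun (P : StatelessProtocol n E Λ) (x : Fin n → Bool)
    (ℓ0 : {e // e ∈ E} → Λ) : ℕ → {e // e ∈ E} → Λ :=
  P.run x (fun _ => Finset.univ) ℓ0

/-- The outputs at time step `t` of the synchronous run (the value at time `0`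
is a dummy value). -/
def syncOut (P : StatelessProtocol n E Λ) (x : Fin n → Bool)
    (ℓ0 : {e // e ∈ E} → Λ) : ℕ → Fin n → Bool
  | 0 => fun _ => false
  | t + 1 => fun i => (P.react i (P.syncRun x ℓ0 t) (x i)).2

/-- Output stabilization under the synchronous schedule. -/
def OutputStabilizing (P : StatelessProtocol n E Λ) : Prop :=
  ∀ x ℓ0, ∃ T, ∀ t, T ≤ t → P.syncOut x ℓ0 t = P.syncOut x ℓ0 T

/-- Label stabilization under the synchronous schedule. -/
def LabelStabilizing (P : StatelessProtocol n E Λ) : Prop :=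
  ∀ x ℓ0, ∃ T, ∀ t, T ≤ t → P.syncRun x ℓ0 t = P.syncRun x ℓ0 T

/-- `P` computes `f` if on every input and from every initial labeling, every
node's output sequence converges to `f x` under the synchronous schedule. -/
def Computes (P : StatelessProtocol n E Λ) (f : (Fin n → Bool) → Bool) : Prop :=
  ∀ x ℓ0, ∃ T, ∀ t, T ≤ t → ∀ i, P.syncOut x ℓ0 t i = f x

end StatelessProtocol

/-- The complete directed graph on `Fin n`. -/
def Kn (n : ℕ) : Finset (Fin n × Fin n) :=
  Finset.univ.filter (fun p => p.1 ≠ p.2)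

/-- The unidirectional `n`-ring: edges `(i, i + 1 mod n)`. -/
def uniRing (n : ℕ) : Finset (Fin n × Fin n) :=
  Finset.image (fun i : Fin n => (i, ⟨((i : ℕ) + 1) % n, Nat.mod_lt _ i.pos⟩)) Finset.univ

/-- The bidirectional `n`-ring: edges `(i, i ± 1 mod n)`. -/
def biRing (n : ℕ) : Finset (Fin n × Fin n) :=
  uniRing n ∪ (uniRing n).image (fun p => (p.2, p.1))

namespace Scratch

/-- The predecessor node on the ring. -/
def prevF {n : ℕ} (j : Fin n) : Fin n := ⟨(j.val + (n - 1)) % n, Nat.mod_lt _ j.pos⟩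

lemma prevF_val {n : ℕ} (j : Fin n) :
    (prevF j).val = if j.val = 0 then n - 1 else j.val - 1 := by
  have hn := j.pos
  have hj := j.isLt
  unfold prevF
  split
  · next h => simp only [h, Nat.zero_add]; exact Nat.mod_eq_of_lt (by omega)
  · next h =>
    show (j.val + (n - 1)) % n = j.val - 1
    have : j.val + (n - 1) = n + (j.val - 1) := by omega
    rw [this, Nat.add_mod_left]; exact Nat.mod_eq_of_lt (by omega)

def ringEdge (n : ℕ) (j : Fin n) : {e // e ∈ uniRing n} :=
  ⟨(j, ⟨((j : ℕ) + 1) % n, Nat.mod_lt _ j.pos⟩), by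
    simp only [uniRing, Finset.mem_image]; exact ⟨j, Finset.mem_univ j, rfl⟩⟩

lemma ringEdge_snd {n : ℕ} (j : Fin n) : (ringEdge n (prevF j)).1.2 = j := by
  apply Fin.ext
  show ((prevF j).val + 1) % n = j.val
  rw [prevF_val]
  have hn := j.pos
  have hj := j.isLt
  split
  · next h =>
    have : n - 1 + 1 = n := by omega
    rw [this, Nat.mod_self]; omega
  · next h =>
    have : j.val - 1 + 1 = j.val := by omega
    rw [this]; exact Nat.mod_eq_of_lt hj

/-- Every edge of the ring is `ringEdge` of its source. -/
lemma edge_eq {n : ℕ} (e : {e // e ∈ uniRing n}) : e = ringEdge n e.1.1 := by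
  obtain ⟨⟨a, b⟩, he⟩ := e
  simp only [uniRing, Finset.mem_image] at he
  obtain ⟨i, -, hi⟩ := he
  cases hi
  rfl

def predFin {q : ℕ} (v : Fin q) : Fin q := ⟨v.val - 1, lt_of_le_of_lt (Nat.sub_le _ _) v.isLt⟩

def myReact (n q : ℕ) (i : Fin n) (ℓ : {e // e ∈ uniRing n} → Fin q) (_ : Bool) :
    ({e // e ∈ uniRing n} → Fin q) × Bool :=
  (fun _ => if i.val = 0 then predFin (ℓ (ringEdge n (prevF i))) else ℓ (ringEdge n (prevF i)),
   if i.val = 0 then decide (2 ≤ (ℓ (ringEdge n (prevF i))).val)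
     else decide ((ℓ (ringEdge n (prevF i))).val ≠ 0))

def myProt (n q : ℕ) : StatelessProtocol n (uniRing n) (Fin q) where
  react := myReact n q
  react_local := by
    intro i ℓ ℓ' x h
    unfold myReact
    rw [h _ (ringEdge_snd i)]

variable {n q : ℕ}

lemma syncRun_succ (x : Fin n → Bool) (ℓ0 : {e // e ∈ uniRing n} → Fin q) (t : ℕ) (j : Fin n) :
    (myProt n q).syncRun x ℓ0 (t+1) (ringEdge n j) =
      if j.val = 0 then predFin ((myProt n q).syncRun x ℓ0 t (ringEdge n (prevF j)))
      else (myProt n q).syncRun x ℓ0 t (ringEdge n (prevF j)) := by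
  show (if _ ∈ _ then _ else _) = _
  rw [if_pos (Finset.mem_univ _)]
  show (if (ringEdge n j).1.1.val = 0 then _ else _) = _
  rfl

lemma syncOut_succ (x : Fin n → Bool) (ℓ0 : {e // e ∈ uniRing n} → Fin q) (t : ℕ) (i : Fin n) :
    (myProt n q).syncOut x ℓ0 (t+1) i =
      if i.val = 0 then decide (2 ≤ ((myProt n q).syncRun x ℓ0 t (ringEdge n (prevF i))).val)
      else decide (((myProt n q).syncRun x ℓ0 t (ringEdge n (prevF i))).val ≠ 0) := rfl

/-- Main invariant. -/
lemma inv (hq : 1 ≤ q) (x : Fin n → Bool) (ℓ0 : {e // e ∈ uniRing n} → Fin q) :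
    ∀ t (j : Fin n),
      n * ((myProt n q).syncRun x ℓ0 t (ringEdge n j)).val ≤ j.val + (n * (q-1) - t) := by
  intro t
  induction t with
  | zero =>
    intro j
    have h1 : (ℓ0 (ringEdge n j)).val ≤ q - 1 := by
      have := (ℓ0 (ringEdge n j)).isLt; omega
    have := Nat.mul_le_mul_left n h1
    exact le_trans this (by omega)
  | succ t ih =>
    intro j
    rw [syncRun_succ]
    have hn := j.pos
    have hjlt := j.isLt
    have hprev := ih (prevF j)
    rw [prevF_val] at hprev
    split
    · next h0 =>
      rw [if_pos h0] at hprev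
      set v := ((myProt n q).syncRun x ℓ0 t (ringEdge n (prevF j))).val with hv
      show n * (v - 1) ≤ _
      rcases Nat.eq_zero_or_pos v with h | h
      · simp [h]
      · have h1 : n * (v - 1) = n * v - n := by
          rw [Nat.mul_sub]; simp
        have h2 : n ≤ n * v := Nat.le_mul_of_pos_right n h
        omega
    · next h0 =>
      rw [if_neg h0] at hprev
      omega

/-- All outputs are false from time `n*(q-1)` on. -/
lemma out_false (hn : 2 ≤ n) (hq : 1 ≤ q) (x : Fin n → Bool)
    (ℓ0 : {e // e ∈ uniRing n} → Fin q) (s : ℕ) (hs : n * (q-1) ≤ s + 1) (i : Fin n) :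
    (myProt n q).syncOut x ℓ0 (s+1) i = false := by
  rw [syncOut_succ]
  have hinv := inv hq x ℓ0 s (prevF i)
  rw [prevF_val] at hinv
  have hi := i.isLt
  set v := ((myProt n q).syncRun x ℓ0 s (ringEdge n (prevF i))).val with hv
  split
  · next h0 =>
    rw [if_pos h0] at hinv
    -- n * v ≤ (n-1) + (T - s) ≤ (n-1) + 1 = n, so v ≤ 1
    simp only [decide_eq_false_iff_not]
    intro hc
    have : n * 2 ≤ n * v := Nat.mul_le_mul_left n hc
    omega
  · next h0 =>
    rw [if_neg h0] at hinv
    -- n * v ≤ (i-1) + 1 ≤ n - 1 < n, so v = 0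
    simp only [ne_eq, decide_eq_false_iff_not, not_not]
    by_contra hc
    have : n * 1 ≤ n * v := Nat.mul_le_mul_left n (by omega)
    omega

lemma out_false' {n q : ℕ} (hn : 2 ≤ n) (hq : 1 ≤ q) (x : Fin n → Bool)
    (ℓ0 : {e // e ∈ uniRing n} → Fin q) (t : ℕ) (h1 : 1 ≤ t) (h2 : n * (q-1) ≤ t)
    (i : Fin n) : (myProt n q).syncOut x ℓ0 t i = false := by
  obtain ⟨s, rfl⟩ : ∃ s, t = s + 1 := ⟨t - 1, by omega⟩
  exact out_false hn hq x ℓ0 s (by omega) i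

def initL (n q : ℕ) (hq : 0 < q) : {e // e ∈ uniRing n} → Fin q :=
  fun e => if e.1.1.val = 0 then ⟨q-1, by omega⟩ else ⟨0, hq⟩

lemma step_r {n q : ℕ} (x : Fin n → Bool) (ℓ0 : {e // e ∈ uniRing n} → Fin q)
    (t r : ℕ) (hr : r + 1 < n) :
    (myProt n q).syncRun x ℓ0 (t+1) (ringEdge n ⟨r+1, hr⟩) =
      (myProt n q).syncRun x ℓ0 t (ringEdge n ⟨r, by omega⟩) := by
  rw [syncRun_succ]
  have hp : prevF (⟨r+1, hr⟩ : Fin n) = ⟨r, by omega⟩ := by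
    apply Fin.ext; rw [prevF_val]; simp
  rw [if_neg (by simp), hp]

lemma step_0 {n q : ℕ} (hn : 2 ≤ n) (x : Fin n → Bool) (ℓ0 : {e // e ∈ uniRing n} → Fin q)
    (t : ℕ) :
    (myProt n q).syncRun x ℓ0 (t+1) (ringEdge n ⟨0, by omega⟩) =
      predFin ((myProt n q).syncRun x ℓ0 t (ringEdge n ⟨n-1, by omega⟩)) := by
  rw [syncRun_succ]
  have hp : prevF (⟨0, by omega⟩ : Fin n) = ⟨n-1, by omega⟩ := by
    apply Fin.ext; rw [prevF_val]; simp
  rw [if_pos rfl, hp]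

lemma shift {n q : ℕ} (hn : 2 ≤ n) (x : Fin n → Bool) (ℓ0 : {e // e ∈ uniRing n} → Fin q)
    (t0 : ℕ) (v : Fin q)
    (h : (myProt n q).syncRun x ℓ0 t0 (ringEdge n ⟨0, by omega⟩) = v) :
    ∀ r (hr : r < n), (myProt n q).syncRun x ℓ0 (t0 + r) (ringEdge n ⟨r, hr⟩) = v := by
  intro r
  induction r with
  | zero => intro hr; exact h
  | succ r ih =>
    intro hr
    rw [show t0 + (r+1) = (t0+r)+1 from rfl, step_r]
    exact ih (by omega)

lemma traj {n q : ℕ} (hn : 2 ≤ n) (hq : 2 ≤ q) (x : Fin n → Bool) :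
    ∀ k, k ≤ q - 2 →
      (myProt n q).syncRun x (initL n q (by omega)) (n*k) (ringEdge n ⟨0, by omega⟩)
        = ⟨q-1-k, by omega⟩ := by
  intro k
  induction k with
  | zero =>
    intro _
    apply Fin.ext
    show (initL n q (by omega) (ringEdge n ⟨0, by omega⟩)).val = q - 1 - 0
    unfold initL
    rw [if_pos (show ((ringEdge n ⟨0, by omega⟩).1.1).val = 0 from rfl)]
    rfl
  | succ k ih =>
    intro hk
    have h1 : (myProt n q).syncRun x (initL n q (by omega)) (n*k + (n-1))
        (ringEdge n ⟨n-1, by omega⟩) = ⟨q-1-k, by omega⟩ :=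
      shift hn x _ (n*k) _ (ih (by omega)) (n-1) (by omega)
    have hmul : n*(k+1) = (n*k + (n-1)) + 1 := by rw [Nat.mul_succ]; omega
    rw [hmul, step_0 hn, h1]
    apply Fin.ext
    show (q-1-k) - 1 = q-1-(k+1)
    omega

end Scratch

set_option maxHeartbeats 1000000 in
open StatelessProtocol in
/-- For every `n ≥ 2` and `q ≥ 2` there is an
output-stabilizing stateless protocol on the unidirectional `n`-ring with label
space of size `q` whose round complexity is exactly `n * (q - 1)`: under every
input and initial labeling all outputs are constant from time step `n * (q-1)`
onward, and for some input, initial labeling and node, the output at time step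
`n * (q - 1)` differs from the output one step earlier. -/
theorem exists_uniRing_protocol_round_exact (n q : ℕ) (hn : 2 ≤ n) (hq : 2 ≤ q) :
    ∃ P : StatelessProtocol n (uniRing n) (Fin q),
      (∀ x ℓ0, ∀ t, n * (q - 1) ≤ t →
        P.syncOut x ℓ0 t = P.syncOut x ℓ0 (n * (q - 1))) ∧
      (∃ x ℓ0 i, P.syncOut x ℓ0 (n * (q - 1)) i ≠
        P.syncOut x ℓ0 (n * (q - 1) - 1) i) := by
  have hq' : (1:ℕ) ≤ q := by omega
  have hT : 1 ≤ n * (q - 1) := Nat.mul_pos (by omega) (by omega)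
  refine ⟨Scratch.myProt n q, ?_, ?_⟩
  · intro x ℓ0 t ht
    funext i
    rw [Scratch.out_false' hn hq' x ℓ0 t (by omega) ht i,
        Scratch.out_false' hn hq' x ℓ0 (n*(q-1)) (by omega) le_rfl i]
  · have hq1 : (0:ℕ) < q := by omega
    refine ⟨fun _ => false, Scratch.initL n q hq1, ⟨n-1, by omega⟩, ?_⟩
    have hmul : n*(q-1) = n*(q-2) + n := by
      rw [show q-1 = (q-2)+1 by omega, Nat.mul_succ]
    have htraj := Scratch.shift hn (fun _ => false) (Scratch.initL n q hq1) (n*(q-2)) _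
        (Scratch.traj hn hq (fun _ => false) (q-2) le_rfl) (n-2) (by omega)
    have hTfalse : (Scratch.myProt n q).syncOut (fun _ => false) (Scratch.initL n q hq1)
        (n*(q-1)) ⟨n-1, by omega⟩ = false := by
      exact Scratch.out_false' hn hq' _ _ _ (by omega) le_rfl _
    have hTtrue : (Scratch.myProt n q).syncOut (fun _ => false) (Scratch.initL n q hq1)
        (n*(q-1) - 1) ⟨n-1, by omega⟩ = true := by
      rw [show n*(q-1) - 1 = (n*(q-2) + (n-2)) + 1 by omega]
      rw [Scratch.syncOut_succ]
      rw [if_neg (show ¬((⟨n-1, by omega⟩ : Fin n).val = 0) from by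
        show ¬(n-1 = 0); omega)]
      have hp : Scratch.prevF (⟨n-1, by omega⟩ : Fin n) = ⟨n-2, by omega⟩ := by
        apply Fin.ext
        rw [Scratch.prevF_val]
        show (if n-1 = 0 then n-1 else n-1-1) = n-2
        rw [if_neg (by omega)]
        omega
      rw [hp, htraj]
      show decide (q-1-(q-2) ≠ 0) = true
      simp
      omega
    rw [hTfalse, hTtrue]
    simp
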